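/- Let r ≥ 2 and k ≥ 1 be integers. Consider the map sending a tuple (m₁,…,m_{k+1}) of units of ZMod r to the k-tuple (Nat.gcd ((m_{i+1} − m_i : ZMod r).val) r)_{i=1,…,k} ∈ ℕ^k. The image of this map has cardinality τ(r)^k when r is odd and τ(r/2)^k when r is even, where τ(n) denotes the number of positive divisors of n. (This image counts the number of different ideal lattices of the gauge-fixed quantum lens spaces C(L_q^{2k+1}(r;m)) among all choices of weights m.) -/

import Mathlib

private lemma gcd_mod_left (a r : ℕ) : Nat.gcd (a % r) r = Nat.gcd a r := by
  conv_rhs => rw [Nat.gcd_comm, Nat.gcd_rec]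

private lemma coprime_of_modEq {a b n : ℕ} (h : a ≡ b [MOD n]) (hb : Nat.Coprime b n) :
    Nat.Coprime a n := by
  unfold Nat.Coprime at *
  rw [← gcd_mod_left a n, h, gcd_mod_left]
  exact hb

private lemma not_dvd_coprime {p a : ℕ} (hp : p.Prime) (h : ¬ p ∣ a) : Nat.Coprime a p := by
  rw [Nat.coprime_comm]
  exact (Nat.Prime.coprime_iff_not_dvd hp).2 h

private lemma exists_good_s (d : ℕ) :
    ∀ e : ℕ, 0 < e → (∀ p : ℕ, p.Prime → p ∣ e → ¬ p ∣ d → 3 ≤ p) →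
      ∃ s, Nat.Coprime s e ∧ Nat.Coprime (1 + d * s) e := by
  intro e
  induction e using Nat.recOnPosPrimePosCoprime with
  | prime_pow p n hp hn =>
    intro _ hyp
    by_cases hpd : p ∣ d
    · refine ⟨1, Nat.coprime_one_left _, Nat.Coprime.pow_right _ (not_dvd_coprime hp ?_)⟩
      intro hdvd
      have h1 : p ∣ 1 := by
        have := Nat.dvd_sub hdvd hpd
        simpa [Nat.mul_one, Nat.add_sub_cancel] using this
      have := Nat.le_of_dvd one_pos h1
      have := hp.two_le
      omega
    · have hp3 : 3 ≤ p := hyp p hp (dvd_pow_self p hn.ne') hpd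
      by_cases h1 : p ∣ 1 + d
      · refine ⟨2, Nat.Coprime.pow_right _ (not_dvd_coprime hp ?_),
          Nat.Coprime.pow_right _ (not_dvd_coprime hp ?_)⟩
        · intro hdvd
          have := Nat.le_of_dvd (by norm_num) hdvd
          omega
        · intro hdvd
          have hd2 : p ∣ d := by
            have h2 : p ∣ (1 + d * 2) - (1 + d) := Nat.dvd_sub hdvd h1
            have : (1 + d * 2) - (1 + d) = d := by omega
            rwa [this] at h2
          exact hpd hd2
      · exact ⟨1, Nat.coprime_one_left _,
          Nat.Coprime.pow_right _ (not_dvd_coprime hp (by simpa using h1))⟩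
  | zero => intro h; omega
  | one => intro _ _; exact ⟨1, by simp, by simp⟩
  | coprime a b ha hb hab iha ihb =>
    intro _ hyp
    obtain ⟨s₁, hs₁, hs₁'⟩ := iha (by omega) fun p pp hpa => hyp p pp (hpa.mul_right b)
    obtain ⟨s₂, hs₂, hs₂'⟩ := ihb (by omega) fun p pp hpb => hyp p pp (hpb.mul_left a)
    obtain ⟨s, hsa, hsb⟩ := Nat.chineseRemainder hab s₁ s₂
    refine ⟨s, Nat.Coprime.mul_right (coprime_of_modEq hsa hs₁) (coprime_of_modEq hsb hs₂), ?_⟩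
    exact Nat.Coprime.mul_right
      (coprime_of_modEq ((Nat.ModEq.refl 1).add (hsa.mul_left d)) hs₁')
      (coprime_of_modEq ((Nat.ModEq.refl 1).add (hsb.mul_left d)) hs₂')

private lemma gcd_unit_mul {r : ℕ} [NeZero r] (u : (ZMod r)ˣ) (x : ZMod r) :
    Nat.gcd ((↑u * x).val) r = Nat.gcd x.val r := by
  rw [ZMod.val_mul, gcd_mod_left]
  exact Nat.Coprime.gcd_mul_left_cancel _ (ZMod.val_coe_unit_coprime u)

private lemma exists_unit_gcd {r d : ℕ} (hr : 2 ≤ r) (hd : d ∣ r) (h2 : Even r → Even d) :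
    ∃ w : (ZMod r)ˣ, Nat.gcd ((↑w - 1 : ZMod r)).val r = d := by
  haveI : NeZero r := ⟨by omega⟩
  have hd0 : 0 < d := Nat.pos_of_dvd_of_pos hd (by omega)
  obtain ⟨e, he⟩ := hd
  have he0 : 0 < e := by
    rcases Nat.eq_zero_or_pos e with h | h
    · subst h; omega
    · exact h
  obtain ⟨s, hs, hs'⟩ := exists_good_s d e he0 (by
    intro p pp hpe hpd
    rcases pp.eq_two_or_odd' with h2' | hodd
    · subst h2'
      have : Even r := by
        rw [he]; exact (even_iff_two_dvd.mpr (hpe.mul_left d))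
      exact absurd (even_iff_two_dvd.mp (h2 this)) hpd
    · have := pp.two_le
      rcases Nat.lt_or_ge p 3 with h | h
      · interval_cases p
        · exact absurd hodd (by decide)
      · exact h)
  set a := 1 + d * s with ha
  have hcop : Nat.Coprime a r := by
    rw [he]
    refine Nat.Coprime.mul_right ?_ hs'
    simp only [ha]
    exact (Nat.coprime_add_mul_left_left 1 d s).mpr (Nat.coprime_one_left d)
  refine ⟨ZMod.unitOfCoprime a hcop, ?_⟩
  have hcast : ((ZMod.unitOfCoprime a hcop : ZMod r)) = (a : ZMod r) := ZMod.coe_unitOfCoprime a hcop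
  rw [hcast]
  have : ((a : ZMod r) - 1) = ((d * s : ℕ) : ZMod r) := by
    push_cast [ha]; ring
  rw [this, ZMod.val_natCast, gcd_mod_left, he, Nat.gcd_mul_left]
  rw [Nat.Coprime] at hs
  rw [hs, mul_one]

private lemma even_val_of_unit_sub_one {r : ℕ} [NeZero r] (h2 : 2 ∣ r) (w : (ZMod r)ˣ) :
    2 ∣ ((↑w - 1 : ZMod r)).val := by
  rw [← ZMod.natCast_eq_zero_iff]
  rw [ZMod.natCast_val, ← ZMod.castHom_apply (h := h2)]
  rw [map_sub, map_one]
  have hu : IsUnit ((ZMod.castHom h2 (ZMod 2)) (↑w : ZMod r)) :=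
    (w.isUnit).map (ZMod.castHom h2 (ZMod 2))
  have : ((ZMod.castHom h2 (ZMod 2)) (↑w : ZMod r)) = 1 := by
    revert hu
    generalize ((ZMod.castHom h2 (ZMod 2)) (↑w : ZMod r)) = x
    revert x
    decide
  rw [this, sub_self]

theorem stmt_1 (r k : ℕ) (hr : 2 ≤ r) (hk : 1 ≤ k) :
    (Odd r → (Set.range (fun (m : Fin (k + 1) → (ZMod r)ˣ) (i : Fin k) =>
        Nat.gcd (((m i.succ : ZMod r) - (m i.castSucc : ZMod r)).val) r)).ncard
        = r.divisors.card ^ k) ∧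
    (Even r → (Set.range (fun (m : Fin (k + 1) → (ZMod r)ˣ) (i : Fin k) =>
        Nat.gcd (((m i.succ : ZMod r) - (m i.castSucc : ZMod r)).val) r)).ncard
        = (r / 2).divisors.card ^ k) := by
  haveI : NeZero r := ⟨by omega⟩
  set g : (ZMod r)ˣ → ℕ := fun w => Nat.gcd ((↑w - 1 : ZMod r)).val r with hg
  -- the single-coordinate lemma
  have key : ∀ (u v : (ZMod r)ˣ),
      Nat.gcd ((↑v - ↑u : ZMod r)).val r = g (u⁻¹ * v) := by
    intro u v
    have h1 : ((v : ZMod r) - ↑u) = ↑u * (↑(u⁻¹ * v) - 1) := by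
      rw [Units.val_mul, mul_sub, ← mul_assoc, Units.mul_inv, one_mul, mul_one]
    rw [h1, gcd_unit_mul]
  -- the set S
  set T : Finset ℕ := r.divisors.filter (fun d => Even r → Even d) with hT
  have hS : Set.range g = ↑T := by
    ext d
    simp only [Set.mem_range, hT, Finset.coe_filter, Set.mem_setOf_eq, Nat.mem_divisors]
    constructor
    · rintro ⟨w, rfl⟩
      refine ⟨⟨Nat.gcd_dvd_right _ _, by omega⟩, fun h2 => ?_⟩
      rw [even_iff_two_dvd] at h2 ⊢
      exact Nat.dvd_gcd (even_val_of_unit_sub_one h2 w) h2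
    · rintro ⟨⟨hdvd, -⟩, h2⟩
      exact exists_unit_gcd hr hdvd h2
  -- range of the full map = pi of S
  have hrange : (Set.range (fun (m : Fin (k + 1) → (ZMod r)ˣ) (i : Fin k) =>
        Nat.gcd (((m i.succ : ZMod r) - (m i.castSucc : ZMod r)).val) r))
      = Set.univ.pi (fun _ : Fin k => (T : Set ℕ)) := by
    rw [← hS]
    ext f
    constructor
    · rintro ⟨m, rfl⟩ i -
      exact ⟨(m i.castSucc)⁻¹ * m i.succ, (key _ _).symm⟩
    · intro hf
      choose w hw using fun i => hf i (Set.mem_univ i)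
      set M : ℕ → (ZMod r)ˣ :=
        fun n => Nat.rec 1 (fun n acc => (if h : n < k then w ⟨n, h⟩ else 1) * acc) n with hM
      refine ⟨fun j => M j.val, funext fun i => ?_⟩
      have hsucc : (i.succ : Fin (k+1)).val = i.val + 1 := Fin.val_succ i
      have hcast : (i.castSucc : Fin (k+1)).val = i.val := rfl
      simp only [hsucc, hcast]
      have hMs : M (i.val + 1) = w i * M i.val := by
        simp only [hM]
        rw [dif_pos i.isLt]
      rw [hMs, key]
      have : (M i.val)⁻¹ * (w i * M i.val) = w i := by
        rw [mul_comm (w i), ← mul_assoc, inv_mul_cancel, one_mul]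
      rw [this, hw]
  have hfin : (Set.range (fun (m : Fin (k + 1) → (ZMod r)ˣ) (i : Fin k) =>
        Nat.gcd (((m i.succ : ZMod r) - (m i.castSucc : ZMod r)).val) r)).ncard = T.card ^ k := by
    rw [hrange, ← Fintype.coe_piFinset, Set.ncard_coe_finset, Fintype.card_piFinset]
    simp
  constructor
  · intro hodd
    rw [hfin]
    congr 1
    rw [hT]
    rw [Finset.filter_true_of_mem]
    intro d _ h2
    exact absurd h2 (Nat.not_even_iff_odd.mpr hodd)
  · intro heven
    rw [hfin]
    congr 1
    have h2r : 2 ∣ r := even_iff_two_dvd.mp heven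
    have hT2 : T = (r / 2).divisors.image (fun e => 2 * e) := by
      rw [hT]
      ext m
      simp only [Finset.mem_filter, Nat.mem_divisors, Finset.mem_image]
      constructor
      · rintro ⟨⟨hm, hr0⟩, hme⟩
        obtain ⟨e, rfl⟩ := even_iff_two_dvd.mp (hme heven)
        refine ⟨e, ⟨?_, (Nat.div_pos hr (by norm_num)).ne'⟩, rfl⟩
        obtain ⟨c, hc⟩ := h2r
        have : 2 * e ∣ 2 * c := by rw [← hc]; exact hm
        rw [hc, Nat.mul_div_cancel_left c (by norm_num)]
        exact (mul_dvd_mul_iff_left (two_ne_zero)).mp this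
      · rintro ⟨e, ⟨he, he0⟩, rfl⟩
        refine ⟨⟨?_, (Nat.lt_of_lt_of_le Nat.zero_lt_two hr).ne'⟩, fun _ => even_two_mul e⟩
        have := mul_dvd_mul_left 2 he
        rwa [Nat.mul_div_cancel' h2r] at this
    rw [hT2, Finset.card_image_of_injective _ (fun a b h => Nat.eq_of_mul_eq_mul_left (by norm_num) h)]
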